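/- Let S be a monoid, A a finite set with the discrete topology, and X ⊆ A^S a subshift, i.e. a closed subset of the product space A^S invariant under the shift action (s·ω)(t) = ω(ts). Then the family of translation maps {x ↦ s·x : s ∈ S} from X to A^S is a fragmented family with respect to the product uniformity of A^S — explicitly: for every nonempty subset B ⊆ X and every finite set T ⊆ S there is an open set O ⊆ X with O ∩ B ≠ ∅ such that for all s ∈ S, all t ∈ T and all x, y ∈ O ∩ B one has x(ts) = y(ts) — if and only if the space X is scattered. Moreover, if S is countable, these conditions are equivalent to X being a countable set. -/

import Mathlib

theorem stmt4 {S A : Type*} [Monoid S] [Finite A] [TopologicalSpace A] [DiscreteTopology A]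
    (X : Set (S → A)) (hXclosed : IsClosed X)
    (hXinv : ∀ s : S, ∀ ω ∈ X, (fun t => ω (t * s)) ∈ X) :
    -- (the family of translations is a fragmented family w.r.t. the product uniformity)
    -- ↔ (`X` is scattered)
    ((∀ B ⊆ X, B.Nonempty → ∀ T : Finset S,
        ∃ O : Set (S → A), IsOpen O ∧ (O ∩ B).Nonempty ∧
          ∀ s : S, ∀ t ∈ T, ∀ x ∈ O ∩ B, ∀ y ∈ O ∩ B, x (t * s) = y (t * s)) ↔
      (∀ B ⊆ X, B.Nonempty → ∃ x ∈ B, ∃ O : Set (S → A), IsOpen O ∧ O ∩ B = {x})) ∧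
    -- moreover, if `S` is countable these are equivalent to `X` being countable
    (Countable S →
      ((∀ B ⊆ X, B.Nonempty → ∀ T : Finset S,
          ∃ O : Set (S → A), IsOpen O ∧ (O ∩ B).Nonempty ∧
            ∀ s : S, ∀ t ∈ T, ∀ x ∈ O ∩ B, ∀ y ∈ O ∩ B, x (t * s) = y (t * s)) ↔
        X.Countable)) := by
  have hiff : (∀ B ⊆ X, B.Nonempty → ∀ T : Finset S,
        ∃ O : Set (S → A), IsOpen O ∧ (O ∩ B).Nonempty ∧
          ∀ s : S, ∀ t ∈ T, ∀ x ∈ O ∩ B, ∀ y ∈ O ∩ B, x (t * s) = y (t * s)) ↔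
      (∀ B ⊆ X, B.Nonempty → ∃ x ∈ B, ∃ O : Set (S → A), IsOpen O ∧ O ∩ B = {x}) := by
    constructor
    · intro h B hB hBne
      obtain ⟨O, hO, ⟨x, hx⟩, hsep⟩ := h B hB hBne {1}
      refine ⟨x, hx.2, O, hO, ?_⟩
      ext y
      simp only [Set.mem_singleton_iff]
      constructor
      · intro hy
        funext s
        have := hsep s 1 (Finset.mem_singleton_self 1) y hy x hx
        simpa using this
      · rintro rfl; exact hx
    · intro h B hB hBne T
      obtain ⟨x, hxB, O, hO, hOB⟩ := h B hB hBne
      refine ⟨O, hO, ⟨x, by rw [hOB]; rfl⟩, ?_⟩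
      intro s t _ u hu v hv
      have hu' : u = x := by have := hOB ▸ hu; exact this
      have hv' : v = x := by have := hOB ▸ hv; exact this
      rw [hu', hv']
  refine ⟨hiff, ?_⟩
  intro hS
  haveI : Countable S := hS
  rw [hiff]
  constructor
  · -- scattered → countable, via Cantor–Bendixson
    intro h
    obtain ⟨V, D, hVct, hDperf, hVD⟩ :=
      exists_countable_union_perfect_of_isClosed (α := S → A) hXclosed
    rcases D.eq_empty_or_nonempty with hD | hD
    · rw [hVD, hD, Set.union_empty]; exact hVct
    · exfalso
      have hDX : D ⊆ X := hVD ▸ Set.subset_union_right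
      obtain ⟨x, hxD, O, hO, hOD⟩ := h D hDX hD
      have hacc := hDperf.acc x hxD
      rw [accPt_iff_nhds] at hacc
      obtain ⟨y, hy, hyx⟩ := hacc O (hO.mem_nhds (by
        have : x ∈ O ∩ D := hOD ▸ rfl
        exact this.1))
      exact hyx (by have := hOD ▸ hy; exact this)
  · -- countable → scattered
    intro hXct B hB hBne
    by_contra hcon
    push_neg at hcon
    have hpre : Preperfect B := by
      intro x hxB
      rw [accPt_iff_nhds]
      intro U hU
      by_contra hno
      push_neg at hno
      obtain ⟨O, hOU, hO, hxO⟩ := mem_nhds_iff.1 hU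
      refine hcon x hxB O hO ?_
      ext y
      simp only [Set.mem_singleton_iff]
      constructor
      · intro hy
        exact hno y ⟨hOU hy.1, hy.2⟩
      · rintro rfl; exact ⟨hxO, hxB⟩
    have hperf : Perfect (closure B) := hpre.perfect_closure
    have hclB : closure B ⊆ X := hXclosed.closure_subset_iff.2 hB
    have hclct : (closure B).Countable := hXct.mono hclB
    have hclne : (closure B).Nonempty := hBne.mono subset_closure
    letI := TopologicalSpace.upgradeIsCompletelyMetrizable (S → A)
    obtain ⟨f, hfr, _, hfinj⟩ := hperf.exists_nat_bool_injection hclne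
    haveI : Countable (Set.range f) := (hclct.mono hfr).to_subtype
    have : Countable (ℕ → Bool) :=
      Function.Injective.countable (f := fun g => (⟨f g, Set.mem_range_self g⟩ : Set.range f))
        (fun a b hab => hfinj (congrArg Subtype.val hab))
    obtain ⟨g, hg⟩ := exists_surjective_nat (ℕ → Bool)
    obtain ⟨n, hn⟩ := hg fun n => !(g n n)
    have := congrFun hn n
    simp at this
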